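/- Shearer's lemma: Let F be a finite multiset of subsets of {1,…,n} such that every i ∈ {1,…,n} belongs to at least t members of F (t ≥ 1). Then for any random vector (X₁,…,Xₙ) of finitely-valued random variables, H(X₁,…,Xₙ) ≤ (1/t) Σ_{F∈𝓕} H(X_F), where X_F = (Xᵢ : i ∈ F). -/

import Mathlib

open Finset

/-- The probability that the random variable `X` takes value `x`, under the
probability mass function `μ` on the finite sample space `Ω`. -/
noncomputable def prOf {Ω α : Type*} [Fintype Ω] [DecidableEq α]
    (μ : Ω → ℝ) (X : Ω → α) (x : α) : ℝ :=
  ∑ ω ∈ Finset.univ.filter (fun ω => X ω = x), μ ω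

/-- The Shannon entropy (base-2) of the random variable `X`. -/
noncomputable def H2 {Ω α : Type*} [Fintype Ω] [Fintype α] [DecidableEq α]
    (μ : Ω → ℝ) (X : Ω → α) : ℝ :=
  ∑ x : α, -(prOf μ X x * Real.logb 2 (prOf μ X x))

/-- The conditional Shannon entropy `H(X|Y)`. -/
noncomputable def condH2 {Ω α β : Type*} [Fintype Ω] [Fintype α] [Fintype β]
    [DecidableEq α] [DecidableEq β] (μ : Ω → ℝ) (X : Ω → α) (Y : Ω → β) : ℝ :=
  ∑ y : β, prOf μ Y y * ∑ x : α,
    -((prOf μ (fun ω => (X ω, Y ω)) (x, y) / prOf μ Y y) *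
      Real.logb 2 (prOf μ (fun ω => (X ω, Y ω)) (x, y) / prOf μ Y y))

section basics
variable {Ω α β γ : Type*} [Fintype Ω] {μ : Ω → ℝ}

lemma prOf_nonneg [DecidableEq α] (hnn : ∀ ω, 0 ≤ μ ω) (X : Ω → α) (x : α) :
    0 ≤ prOf μ X x :=
  Finset.sum_nonneg fun ω _ => hnn ω

lemma sum_prOf [Fintype α] [DecidableEq α] (X : Ω → α) : ∑ x, prOf μ X x = ∑ ω, μ ω := by
  unfold prOf
  exact Finset.sum_fiberwise_of_maps_to (fun ω _ => mem_univ _) _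

lemma prOf_fst [Fintype β] [DecidableEq α] [DecidableEq β] (XY : Ω → α × β) (x : α) :
    prOf μ (fun ω => (XY ω).1) x = ∑ y, prOf μ XY (x, y) := by
  unfold prOf
  simp only [Finset.sum_filter]
  rw [Finset.sum_comm]
  refine Finset.sum_congr rfl fun ω _ => ?_
  simp [Prod.ext_iff, ite_and, Finset.sum_ite_eq, eq_comm]

lemma prOf_snd [Fintype α] [DecidableEq α] [DecidableEq β] (XY : Ω → α × β) (y : β) :
    prOf μ (fun ω => (XY ω).2) y = ∑ x, prOf μ XY (x, y) := by
  unfold prOf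
  simp only [Finset.sum_filter]
  rw [Finset.sum_comm]
  refine Finset.sum_congr rfl fun ω _ => ?_
  simp [Prod.ext_iff, ite_and, Finset.sum_ite_eq, eq_comm]

lemma prOf_comp_inj [DecidableEq α] [DecidableEq β] {e : α → β} (he : Function.Injective e)
    (X : Ω → α) (x : α) :
    prOf μ (fun ω => e (X ω)) (e x) = prOf μ X x := by
  unfold prOf
  congr 1
  ext ω
  simp [he.eq_iff]

lemma prOf_comp_notin [DecidableEq α] [DecidableEq β] (e : α → β) (X : Ω → α) {y : β}
    (hy : ∀ x, e x ≠ y) :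
    prOf μ (fun ω => e (X ω)) y = 0 := by
  unfold prOf
  rw [Finset.filter_false_of_mem, Finset.sum_empty]
  exact fun ω _ => hy (X ω)

lemma H2_comp_inj [Fintype α] [Fintype β] [DecidableEq α] [DecidableEq β]
    {e : α → β} (he : Function.Injective e) (X : Ω → α) :
    H2 μ (fun ω => e (X ω)) = H2 μ X := by
  unfold H2
  rw [← Finset.sum_subset (Finset.subset_univ (Finset.univ.image e))]
  · rw [Finset.sum_image (fun a _ b _ h => he h)]
    exact Finset.sum_congr rfl fun x _ => by rw [prOf_comp_inj he]
  · intro y _ hy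
    rw [prOf_comp_notin e X (fun x hx => hy (by simpa [hx] using Finset.mem_image_of_mem e (mem_univ x)))]
    simp

lemma condH2_comp_inj [Fintype α] [Fintype β] [Fintype γ] [DecidableEq α] [DecidableEq β]
    [DecidableEq γ] {e : γ → β} (he : Function.Injective e) (X : Ω → α) (Z : Ω → γ) :
    condH2 μ X (fun ω => e (Z ω)) = condH2 μ X Z := by
  unfold condH2
  rw [← Finset.sum_subset (Finset.subset_univ (Finset.univ.image e))]
  · rw [Finset.sum_image (fun a _ b _ h => he h)]
    refine Finset.sum_congr rfl fun z _ => ?_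
    have h1 : prOf μ (fun ω => e (Z ω)) (e z) = prOf μ Z z := prOf_comp_inj he Z z
    have h2 : ∀ x, prOf μ (fun ω => (X ω, e (Z ω))) (x, e z)
        = prOf μ (fun ω => (X ω, Z ω)) (x, z) := by
      intro x
      have hE : Function.Injective (Prod.map (id : α → α) e) :=
        Function.Injective.prodMap Function.injective_id he
      exact prOf_comp_inj (μ := μ) hE (fun ω => (X ω, Z ω)) (x, z)
    rw [h1]
    congr 1
    exact Finset.sum_congr rfl fun x _ => by rw [h2]
  · intro y _ hy
    rw [prOf_comp_notin e Z (fun x hx => hy (by simpa [hx] using Finset.mem_image_of_mem e (mem_univ x)))]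
    simp

end basics

section chain
variable {Ω α β γ : Type*} [Fintype Ω] {μ : Ω → ℝ}

lemma sum_prOf_pair [Fintype α] [DecidableEq α] [DecidableEq β] (X : Ω → α) (Y : Ω → β)
    (y : β) : ∑ x, prOf μ (fun ω => (X ω, Y ω)) (x, y) = prOf μ Y y :=
  (prOf_snd (fun ω => (X ω, Y ω)) y).symm

lemma prOf_pair_le_snd [Fintype α] [DecidableEq α] [DecidableEq β] (hnn : ∀ ω, 0 ≤ μ ω)
    (X : Ω → α) (Y : Ω → β) (x : α) (y : β) :
    prOf μ (fun ω => (X ω, Y ω)) (x, y) ≤ prOf μ Y y := by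
  rw [← sum_prOf_pair X Y y]
  exact Finset.single_le_sum (f := fun x => prOf μ (fun ω => (X ω, Y ω)) (x, y))
    (fun x _ => prOf_nonneg hnn _ _) (mem_univ x)

lemma chain_aux {α : Type*} [Fintype α] (q : ℝ) (P : α → ℝ)
    (hPn : ∀ x, 0 ≤ P x) (hPle : ∀ x, P x ≤ q) (hS : ∑ x, P x = q) :
    ∑ x, -(P x * Real.logb 2 (P x))
      = -(q * Real.logb 2 q) + q * ∑ x, -((P x / q) * Real.logb 2 (P x / q)) := by
  by_cases hqz : q = 0
  · have hPz : ∀ x, P x = 0 := fun x => le_antisymm (hqz ▸ hPle x) (hPn x)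
    simp [hPz, hqz]
  · have key : ∀ x, q * -((P x / q) * Real.logb 2 (P x / q))
        = -(P x * Real.logb 2 (P x)) + P x * Real.logb 2 q := by
      intro x
      by_cases hPz : P x = 0
      · simp [hPz]
      · rw [Real.logb_div hPz hqz]
        field_simp
        ring
    rw [Finset.mul_sum, Finset.sum_congr rfl (fun x _ => key x), Finset.sum_add_distrib,
      ← Finset.sum_mul, hS]
    ring

lemma chain_rule [Fintype α] [Fintype β] [DecidableEq α] [DecidableEq β]
    (hnn : ∀ ω, 0 ≤ μ ω) (X : Ω → α) (Y : Ω → β) :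
    H2 μ (fun ω => (X ω, Y ω)) = H2 μ Y + condH2 μ X Y := by
  unfold H2 condH2
  rw [Fintype.sum_prod_type, Finset.sum_comm, ← Finset.sum_add_distrib]
  refine Finset.sum_congr rfl fun y _ => ?_
  exact chain_aux (prOf μ Y y) (fun x => prOf μ (fun ω => (X ω, Y ω)) (x, y))
    (fun x => prOf_nonneg hnn _ _) (fun x => prOf_pair_le_snd hnn X Y x y)
    (sum_prOf_pair X Y y)

end chain

section gibbs

lemma sum_logb_ratio_le {ι : Type*} [Fintype ι] [DecidableEq ι] (p v : ι → ℝ)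
    (hp : ∀ i, 0 ≤ p i) (hv : ∀ i, p i ≠ 0 → 0 < v i)
    (hp1 : ∑ i, p i = 1) (hpv : ∑ i, p i * v i ≤ 1) :
    ∑ i, p i * Real.logb 2 (v i) ≤ 0 := by
  classical
  set T : Finset ι := Finset.univ.filter (fun i => p i ≠ 0) with hT
  have hzero : ∀ i ∈ Finset.univ, i ∉ T → p i = 0 := by
    intro i _ hi
    by_contra h
    exact hi (by simp [hT, h])
  have e1 : ∑ i ∈ T, p i * Real.logb 2 (v i) = ∑ i, p i * Real.logb 2 (v i) :=
    Finset.sum_subset (Finset.subset_univ T) (fun i h1 h2 => by simp [hzero i h1 h2])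
  have e2 : ∑ i ∈ T, p i = 1 := by
    rw [← hp1]
    exact Finset.sum_subset (Finset.subset_univ T) (fun i h1 h2 => hzero i h1 h2)
  have e3 : ∑ i ∈ T, p i * v i ≤ 1 := by
    refine le_trans (le_of_eq ?_) hpv
    exact Finset.sum_subset (Finset.subset_univ T) (fun i h1 h2 => by simp [hzero i h1 h2])
  have e4 : (0:ℝ) ≤ ∑ i ∈ T, p i * v i :=
    Finset.sum_nonneg fun i hi => le_of_lt
      (mul_pos (lt_of_le_of_ne (hp i) (Ne.symm ((Finset.mem_filter.1 hi).2)))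
        (hv i ((Finset.mem_filter.1 hi).2)))
  -- Jensen
  have hjen : ∑ i ∈ T, p i * Real.log (v i) ≤ Real.log (∑ i ∈ T, p i * v i) := by
    have := (strictConcaveOn_log_Ioi.concaveOn).le_map_sum
      (t := T) (w := p) (p := v) (fun i _ => hp i) e2
      (fun i hi => hv i ((Finset.mem_filter.1 hi).2))
    simpa [smul_eq_mul] using this
  have hlog : Real.log (∑ i ∈ T, p i * v i) ≤ 0 := Real.log_nonpos e4 e3
  have hfin : ∑ i ∈ T, p i * Real.logb 2 (v i) ≤ 0 := by
    have h2 : (0:ℝ) < Real.log 2 := Real.log_pos one_lt_two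
    have : ∑ i ∈ T, p i * Real.logb 2 (v i)
        = (∑ i ∈ T, p i * Real.log (v i)) / Real.log 2 := by
      rw [Finset.sum_div]
      exact Finset.sum_congr rfl fun i _ => by rw [Real.logb]; ring
    rw [this]
    exact div_nonpos_of_nonpos_of_nonneg (le_trans hjen hlog) (le_of_lt h2)
  linarith [e1 ▸ hfin]

end gibbs

section marg
variable {Ω : Type*} [Fintype Ω] {μ : Ω → ℝ}

lemma prOf_comp {ι κ : Type*} [Fintype ι] [DecidableEq ι] [DecidableEq κ]
    (f : ι → κ) (W : Ω → ι) (u : κ) :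
    prOf μ (fun ω => f (W ω)) u = ∑ w ∈ Finset.univ.filter (fun w => f w = u), prOf μ W w := by
  unfold prOf
  rw [Finset.sum_fiberwise_eq_sum_filter Finset.univ (Finset.univ.filter (fun w => f w = u)) W μ]
  congr 1
  ext ω
  simp

lemma H2_comp_fiber {ι κ : Type*} [Fintype ι] [Fintype κ] [DecidableEq ι] [DecidableEq κ]
    (f : ι → κ) (W : Ω → ι) :
    H2 μ (fun ω => f (W ω))
      = ∑ w : ι, -(prOf μ W w * Real.logb 2 (prOf μ (fun ω => f (W ω)) (f w))) := by
  unfold H2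
  rw [← Finset.sum_fiberwise_of_maps_to (g := f) (fun w _ => Finset.mem_univ (f w))
    (fun w => -(prOf μ W w * Real.logb 2 (prOf μ (fun ω => f (W ω)) (f w))))]
  refine Finset.sum_congr rfl fun u _ => ?_
  have : ∑ w ∈ Finset.univ.filter (fun w => f w = u),
      -(prOf μ W w * Real.logb 2 (prOf μ (fun ω => f (W ω)) (f w)))
      = ∑ w ∈ Finset.univ.filter (fun w => f w = u),
      -(prOf μ W w * Real.logb 2 (prOf μ (fun ω => f (W ω)) u)) := by
    refine Finset.sum_congr rfl fun w hw => ?_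
    rw [(Finset.mem_filter.1 hw).2]
  rw [this, Finset.sum_neg_distrib, ← Finset.sum_mul, ← prOf_comp f W u]

lemma prOf_le_comp {ι κ : Type*} [Fintype ι] [DecidableEq ι] [DecidableEq κ]
    (hnn : ∀ ω, 0 ≤ μ ω) (f : ι → κ) (W : Ω → ι) (w : ι) :
    prOf μ W w ≤ prOf μ (fun ω => f (W ω)) (f w) := by
  rw [prOf_comp f W (f w)]
  exact Finset.single_le_sum (fun i _ => prOf_nonneg hnn W i) (by simp)

end marg

section submod
variable {Ω α β γ : Type*} [Fintype Ω] {μ : Ω → ℝ}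
  [Fintype α] [Fintype β] [Fintype γ] [DecidableEq α] [DecidableEq β] [DecidableEq γ]

lemma sum_prOf_pair_fst (Y : Ω → β) (Z : Ω → γ) (y : β) :
    ∑ z, prOf μ (fun ω => (Y ω, Z ω)) (y, z) = prOf μ Y y :=
  (prOf_fst (fun ω => (Y ω, Z ω)) y).symm

lemma submod (hnn : ∀ ω, 0 ≤ μ ω) (hsum : ∑ ω, μ ω = 1)
    (X : Ω → α) (Y : Ω → β) (Z : Ω → γ) :
    H2 μ (fun ω => (X ω, (Y ω, Z ω))) + H2 μ Y
      ≤ H2 μ (fun ω => (X ω, Y ω)) + H2 μ (fun ω => (Y ω, Z ω)) := by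
  classical
  have hP0 : ∀ w : α × β × γ, 0 ≤ prOf μ (fun ω => (X ω, Y ω, Z ω)) w :=
    fun w => prOf_nonneg hnn _ w
  have hR0 : ∀ w : α × β × γ, 0 ≤ prOf μ (fun ω => (X ω, Y ω)) (w.1, w.2.1) :=
    fun w => prOf_nonneg hnn _ _
  have hS0 : ∀ w : α × β × γ, 0 ≤ prOf μ (fun ω => (Y ω, Z ω)) w.2 :=
    fun w => prOf_nonneg hnn _ _
  have hQ0 : ∀ w : α × β × γ, 0 ≤ prOf μ Y w.2.1 := fun w => prOf_nonneg hnn _ _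
  have hPR : ∀ w : α × β × γ,
      prOf μ (fun ω => (X ω, Y ω, Z ω)) w ≤ prOf μ (fun ω => (X ω, Y ω)) (w.1, w.2.1) :=
    fun w => prOf_le_comp hnn (fun w : α × β × γ => (w.1, w.2.1))
      (fun ω => (X ω, Y ω, Z ω)) w
  have hPS : ∀ w : α × β × γ,
      prOf μ (fun ω => (X ω, Y ω, Z ω)) w ≤ prOf μ (fun ω => (Y ω, Z ω)) w.2 :=
    fun w => prOf_le_comp hnn (fun w : α × β × γ => w.2) (fun ω => (X ω, Y ω, Z ω)) w
  have hPQ : ∀ w : α × β × γ,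
      prOf μ (fun ω => (X ω, Y ω, Z ω)) w ≤ prOf μ Y w.2.1 :=
    fun w => prOf_le_comp hnn (fun w : α × β × γ => w.2.1) (fun ω => (X ω, Y ω, Z ω)) w
  set P : α × β × γ → ℝ := prOf μ (fun ω => (X ω, Y ω, Z ω)) with hPdef
  set v : α × β × γ → ℝ := fun w =>
    prOf μ (fun ω => (X ω, Y ω)) (w.1, w.2.1) * prOf μ (fun ω => (Y ω, Z ω)) w.2
      / (P w * prOf μ Y w.2.1) with hvdef
  -- positivity facts on the support
  have hpos : ∀ w, P w ≠ 0 →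
      0 < P w ∧ 0 < prOf μ (fun ω => (X ω, Y ω)) (w.1, w.2.1)
        ∧ 0 < prOf μ (fun ω => (Y ω, Z ω)) w.2 ∧ 0 < prOf μ Y w.2.1 := by
    intro w hw
    have h1 : 0 < P w := lt_of_le_of_ne (hP0 w) (Ne.symm hw)
    exact ⟨h1, lt_of_lt_of_le h1 (hPR w), lt_of_lt_of_le h1 (hPS w), lt_of_lt_of_le h1 (hPQ w)⟩
  have hv : ∀ w, P w ≠ 0 → 0 < v w := by
    intro w hw
    obtain ⟨h1, h2, h3, h4⟩ := hpos w hw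
    exact div_pos (mul_pos h2 h3) (mul_pos h1 h4)
  have hp1 : ∑ w, P w = 1 := by rw [hPdef, sum_prOf]; exact hsum
  -- the total mass bound
  have hpv : ∑ w, P w * v w ≤ 1 := by
    have hle : ∀ w : α × β × γ, P w * v w ≤
        (if prOf μ Y w.2.1 = 0 then 0 else
          prOf μ (fun ω => (X ω, Y ω)) (w.1, w.2.1) * prOf μ (fun ω => (Y ω, Z ω)) w.2
            / prOf μ Y w.2.1) := by
      intro w
      by_cases hw : P w = 0
      · rw [hw, zero_mul]
        split_ifs
        · exact le_refl 0
        · exact div_nonneg (mul_nonneg (hR0 w) (hS0 w)) (hQ0 w)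
      · obtain ⟨h1, h2, h3, h4⟩ := hpos w hw
        rw [if_neg (ne_of_gt h4)]
        apply le_of_eq
        simp only [hvdef]
        field_simp
    refine le_trans (Finset.sum_le_sum (fun w _ => hle w)) (le_of_eq ?_)
    -- ∑ over the product splits
    rw [Fintype.sum_prod_type]
    have inner_eq : ∀ x : α, ∑ u : β × γ,
        (if prOf μ Y u.1 = 0 then 0 else
          prOf μ (fun ω => (X ω, Y ω)) (x, u.1) * prOf μ (fun ω => (Y ω, Z ω)) u
            / prOf μ Y u.1)
        = ∑ y : β, ∑ z : γ, (if prOf μ Y y = 0 then 0 else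
          prOf μ (fun ω => (X ω, Y ω)) (x, y) * prOf μ (fun ω => (Y ω, Z ω)) (y, z)
            / prOf μ Y y) := fun x => Fintype.sum_prod_type _
    rw [Finset.sum_congr rfl (fun x _ => inner_eq x), Finset.sum_comm]
    have per_y : ∀ y : β, ∑ x : α, ∑ z : γ, (if prOf μ Y y = 0 then 0 else
        prOf μ (fun ω => (X ω, Y ω)) (x, y) * prOf μ (fun ω => (Y ω, Z ω)) (y, z)
          / prOf μ Y y) = prOf μ Y y := by
      intro y
      by_cases hq : prOf μ Y y = 0
      · simp [hq]
      · simp only [if_neg hq]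
        have : ∀ x : α, ∑ z : γ, prOf μ (fun ω => (X ω, Y ω)) (x, y)
            * prOf μ (fun ω => (Y ω, Z ω)) (y, z) / prOf μ Y y
            = prOf μ (fun ω => (X ω, Y ω)) (x, y) := by
          intro x
          rw [show (fun z => prOf μ (fun ω => (X ω, Y ω)) (x, y)
              * prOf μ (fun ω => (Y ω, Z ω)) (y, z) / prOf μ Y y)
            = (fun z => prOf μ (fun ω => (X ω, Y ω)) (x, y)
              * (prOf μ (fun ω => (Y ω, Z ω)) (y, z) / prOf μ Y y)) by
              funext z; ring]
          rw [← Finset.mul_sum, ← Finset.sum_div, sum_prOf_pair_fst Y Z y, div_self hq,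
            mul_one]
        rw [Finset.sum_congr rfl (fun x _ => this x), sum_prOf_pair X Y y]
    rw [Finset.sum_congr rfl (fun y _ => per_y y), sum_prOf]
    exact hsum
  -- the key Jensen bound
  have key : ∑ w, P w * Real.logb 2 (v w) ≤ 0 :=
    sum_logb_ratio_le P v hP0 hv hp1 hpv
  -- rewrite the entropies as sums over the triple space
  have c0 : H2 μ (fun ω => (X ω, (Y ω, Z ω)))
      = ∑ w : α × β × γ, -(P w * Real.logb 2 (P w)) := rfl
  have c1 : H2 μ (fun ω => (X ω, Y ω)) = ∑ w : α × β × γ,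
      -(P w * Real.logb 2 (prOf μ (fun ω => (X ω, Y ω)) (w.1, w.2.1))) :=
    H2_comp_fiber (fun w : α × β × γ => (w.1, w.2.1)) (fun ω => (X ω, Y ω, Z ω))
  have c2 : H2 μ (fun ω => (Y ω, Z ω)) = ∑ w : α × β × γ,
      -(P w * Real.logb 2 (prOf μ (fun ω => (Y ω, Z ω)) w.2)) :=
    H2_comp_fiber (fun w : α × β × γ => w.2) (fun ω => (X ω, Y ω, Z ω))
  have c3 : H2 μ Y = ∑ w : α × β × γ, -(P w * Real.logb 2 (prOf μ Y w.2.1)) :=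
    H2_comp_fiber (fun w : α × β × γ => w.2.1) (fun ω => (X ω, Y ω, Z ω))
  have hterm : ∀ w : α × β × γ, P w * Real.logb 2 (v w)
      = (-(P w * Real.logb 2 (P w)) + -(P w * Real.logb 2 (prOf μ Y w.2.1)))
        - (-(P w * Real.logb 2 (prOf μ (fun ω => (X ω, Y ω)) (w.1, w.2.1)))
          + -(P w * Real.logb 2 (prOf μ (fun ω => (Y ω, Z ω)) w.2))) := by
    intro w
    by_cases hw : P w = 0
    · rw [hw]; ring
    · obtain ⟨h1, h2, h3, h4⟩ := hpos w hw
      rw [hvdef]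
      rw [Real.logb_div (by positivity) (by positivity),
        Real.logb_mul (ne_of_gt h2) (ne_of_gt h3),
        Real.logb_mul (ne_of_gt h1) (ne_of_gt h4)]
      ring
  have hsplit : ∑ w, P w * Real.logb 2 (v w)
      = (H2 μ (fun ω => (X ω, (Y ω, Z ω))) + H2 μ Y)
        - (H2 μ (fun ω => (X ω, Y ω)) + H2 μ (fun ω => (Y ω, Z ω))) := by
    rw [c0, c1, c2, c3, ← Finset.sum_add_distrib, ← Finset.sum_add_distrib,
      ← Finset.sum_sub_distrib]
    exact Finset.sum_congr rfl fun w _ => hterm w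
  linarith [hsplit ▸ key]

end submod

section cond
variable {Ω α β γ : Type*} [Fintype Ω] {μ : Ω → ℝ}
  [Fintype α] [Fintype β] [Fintype γ] [DecidableEq α] [DecidableEq β] [DecidableEq γ]

lemma condH2_nonneg (hnn : ∀ ω, 0 ≤ μ ω) (X : Ω → α) (Y : Ω → β) :
    0 ≤ condH2 μ X Y := by
  unfold condH2
  refine Finset.sum_nonneg fun y _ => mul_nonneg (prOf_nonneg hnn Y y)
    (Finset.sum_nonneg fun x _ => ?_)
  rw [neg_nonneg]
  by_cases hq : prOf μ Y y = 0
  · simp [hq]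
  · have h1 : 0 ≤ prOf μ (fun ω => (X ω, Y ω)) (x, y) / prOf μ Y y :=
      div_nonneg (prOf_nonneg hnn _ _)  (prOf_nonneg hnn Y y)
    have h2 : prOf μ (fun ω => (X ω, Y ω)) (x, y) / prOf μ Y y ≤ 1 := by
      rw [div_le_one (lt_of_le_of_ne (prOf_nonneg hnn Y y) (Ne.symm hq))]
      exact prOf_pair_le_snd hnn X Y x y
    exact mul_nonpos_of_nonneg_of_nonpos h1 (Real.logb_nonpos one_lt_two h1 h2)

lemma condH2_pair_le (hnn : ∀ ω, 0 ≤ μ ω) (hsum : ∑ ω, μ ω = 1)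
    (X : Ω → α) (Y : Ω → β) (Z : Ω → γ) :
    condH2 μ X (fun ω => (Y ω, Z ω)) ≤ condH2 μ X Y := by
  have h1 : H2 μ (fun ω => (X ω, (Y ω, Z ω)))
      = H2 μ (fun ω => (Y ω, Z ω)) + condH2 μ X (fun ω => (Y ω, Z ω)) :=
    chain_rule hnn X (fun ω => (Y ω, Z ω))
  have h2 : H2 μ (fun ω => (X ω, Y ω)) = H2 μ Y + condH2 μ X Y := chain_rule hnn X Y
  have h3 := submod hnn hsum X Y Z
  linarith

lemma H2_subsingleton [Subsingleton α] (hsum : ∑ ω, μ ω = 1) (X : Ω → α) :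
    H2 μ X = 0 := by
  unfold H2
  refine Finset.sum_eq_zero fun x _ => ?_
  have : prOf μ X x = 1 := by
    unfold prOf
    rw [Finset.filter_true_of_mem (fun ω _ => Subsingleton.elim _ _), hsum]
  simp [this]

end cond

section xs
variable {Ω : Type*} [Fintype Ω] {μ : Ω → ℝ} {n : ℕ} {α : Fin n → Type*}
  [∀ i, Fintype (α i)] [∀ i, DecidableEq (α i)]

/-- The restriction of the random vector to coordinates in `S`. -/
def XS (X : ∀ i, Ω → α i) (S : Finset (Fin n)) : Ω → ∀ i : {i // i ∈ S}, α i :=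
  fun ω i => X i ω

lemma condH2_XS_mono {β : Type*} [Fintype β] [DecidableEq β]
    (hnn : ∀ ω, 0 ≤ μ ω) (hsum : ∑ ω, μ ω = 1) (X : ∀ i, Ω → α i) (Y : Ω → β)
    {T T' : Finset (Fin n)} (hTT : T ⊆ T') :
    condH2 μ Y (XS X T') ≤ condH2 μ Y (XS X T) := by
  classical
  set e : (∀ i : {i // i ∈ T'}, α i) → (∀ i : {i // i ∈ T}, α i) × (∀ i : {i // i ∈ T' \ T}, α i) :=
    fun v => (fun i => v ⟨i.1, hTT i.2⟩, fun i => v ⟨i.1, (Finset.mem_sdiff.1 i.2).1⟩) with he_def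
  have he : Function.Injective e := by
    intro v w h
    funext j
    obtain ⟨j, hj⟩ := j
    by_cases hjT : j ∈ T
    · exact congrFun (congrArg Prod.fst h) ⟨j, hjT⟩
    · exact congrFun (congrArg Prod.snd h) ⟨j, Finset.mem_sdiff.2 ⟨hj, hjT⟩⟩
  calc condH2 μ Y (XS X T') = condH2 μ Y (fun ω => e (XS X T' ω)) :=
        (condH2_comp_inj he Y (XS X T')).symm
    _ = condH2 μ Y (fun ω => (XS X T ω, XS X (T' \ T) ω)) := rfl
    _ ≤ condH2 μ Y (XS X T) := condH2_pair_le hnn hsum Y (XS X T) (XS X (T' \ T))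

lemma H2_XS_insert (hnn : ∀ ω, 0 ≤ μ ω) (X : ∀ i, Ω → α i) (i : Fin n)
    (S : Finset (Fin n)) (hi : i ∉ S) :
    H2 μ (XS X (insert i S)) = H2 μ (XS X S) + condH2 μ (X i) (XS X S) := by
  classical
  set e : (∀ j : {j // j ∈ insert i S}, α j) → α i × (∀ j : {j // j ∈ S}, α j) :=
    fun v => (v ⟨i, Finset.mem_insert_self i S⟩, fun j => v ⟨j.1, Finset.mem_insert_of_mem j.2⟩)
    with he_def
  have he : Function.Injective e := by
    intro v w h
    funext j
    obtain ⟨j, hj⟩ := j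
    rcases Finset.mem_insert.1 hj with rfl | hjS
    · exact congrArg Prod.fst h
    · exact congrFun (congrArg Prod.snd h) ⟨j, hjS⟩
  calc H2 μ (XS X (insert i S)) = H2 μ (fun ω => e (XS X (insert i S) ω)) :=
        (H2_comp_inj he (XS X (insert i S))).symm
    _ = H2 μ (fun ω => (X i ω, XS X S ω)) := rfl
    _ = H2 μ (XS X S) + condH2 μ (X i) (XS X S) := chain_rule hnn (X i) (XS X S)

end xs

section main
variable {Ω : Type*} [Fintype Ω] {μ : Ω → ℝ} {n : ℕ} {α : Fin n → Type*}
  [∀ i, Fintype (α i)] [∀ i, DecidableEq (α i)]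

/-- The set of coordinates below `k`. -/
def Bf (n k : ℕ) : Finset (Fin n) := Finset.univ.filter (fun j => (j : ℕ) < k)

lemma H2_XS_empty (hsum : ∑ ω, μ ω = 1) (X : ∀ i, Ω → α i) :
    H2 μ (XS X (∅ : Finset (Fin n))) = 0 := by
  haveI : IsEmpty {i : Fin n // i ∈ (∅ : Finset (Fin n))} :=
    ⟨fun i => absurd i.2 (Finset.notMem_empty _)⟩
  exact H2_subsingleton hsum (XS X ∅)

lemma chain_prefix (hnn : ∀ ω, 0 ≤ μ ω) (hsum : ∑ ω, μ ω = 1) (X : ∀ i, Ω → α i) :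
    ∀ k, H2 μ (XS X (Bf n k))
      = ∑ i ∈ Bf n k, condH2 μ (X i) (XS X (Bf n i.val)) := by
  intro k
  induction k with
  | zero =>
    have h0 : Bf n 0 = ∅ := by ext j; simp [Bf]
    rw [h0, H2_XS_empty hsum X, Finset.sum_empty]
  | succ k ih =>
    by_cases hk : k < n
    · have hins : Bf n (k + 1) = insert ⟨k, hk⟩ (Bf n k) := by
        ext j
        simp only [Bf, Finset.mem_filter, Finset.mem_univ, true_and, Finset.mem_insert,
          Fin.ext_iff]
        omega
      have hnotin : (⟨k, hk⟩ : Fin n) ∉ Bf n k := by simp [Bf]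
      rw [hins, H2_XS_insert hnn X _ _ hnotin, Finset.sum_insert hnotin, ih]
      exact add_comm _ _
    · have heq : Bf n (k + 1) = Bf n k := by
        ext j
        have := j.isLt
        simp only [Bf, Finset.mem_filter, Finset.mem_univ, true_and]
        omega
      rw [heq]
      exact ih

lemma sum_c_le (hnn : ∀ ω, 0 ≤ μ ω) (hsum : ∑ ω, μ ω = 1) (X : ∀ i, Ω → α i)
    (S : Finset (Fin n)) :
    ∑ i ∈ S, condH2 μ (X i) (XS X (Bf n i.val)) ≤ H2 μ (XS X S) := by
  classical
  induction S using Finset.strongInductionOn with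
  | _ S ih =>
    rcases S.eq_empty_or_nonempty with rfl | hne
    · rw [Finset.sum_empty, H2_XS_empty hsum X]
    · have hiS := S.max'_mem hne
      set i := S.max' hne with hi
      have hins : insert i (S.erase i) = S := Finset.insert_erase hiS
      have hni : i ∉ S.erase i := Finset.notMem_erase i S
      have hsub : S.erase i ⊆ Bf n i.val := by
        intro j hj
        have h1 := Finset.mem_erase.1 hj
        have h2 : j ≤ i := S.le_max' j h1.2
        simp only [Bf, Finset.mem_filter, Finset.mem_univ, true_and]
        exact lt_of_le_of_ne (by exact_mod_cast h2) (fun hv => h1.1 (Fin.ext hv))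
      calc ∑ i' ∈ S, condH2 μ (X i') (XS X (Bf n i'.val))
          = condH2 μ (X i) (XS X (Bf n i.val))
            + ∑ i' ∈ S.erase i, condH2 μ (X i') (XS X (Bf n i'.val)) :=
            (Finset.add_sum_erase S _ hiS).symm
        _ ≤ condH2 μ (X i) (XS X (S.erase i)) + H2 μ (XS X (S.erase i)) :=
            add_le_add (condH2_XS_mono hnn hsum X (X i) hsub)
              (ih _ (Finset.erase_ssubset hiS))
        _ = H2 μ (XS X (insert i (S.erase i))) := by
            rw [H2_XS_insert hnn X i _ hni]
            ring
        _ = H2 μ (XS X S) := by rw [hins]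

end main

/-- Shearer's lemma: if each coordinate `i ∈ [n]` is covered at least `t ≥ 1` times by
the (multi)family `F`, then `H(X₁,…,Xₙ) ≤ (1/t) Σ_{F∈𝓕} H(X_F)`. -/
theorem shearer {Ω : Type*} [Fintype Ω] {n m t : ℕ} (ht : 1 ≤ t)
    (F : Fin m → Finset (Fin n))
    (hcov : ∀ i : Fin n, t ≤ (Finset.univ.filter (fun j => i ∈ F j)).card)
    {α : Fin n → Type*} [∀ i, Fintype (α i)] [∀ i, DecidableEq (α i)]
    (μ : Ω → ℝ) (hnn : ∀ ω, 0 ≤ μ ω) (hsum : ∑ ω, μ ω = 1)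
    (X : ∀ i, Ω → α i) :
    H2 μ (fun ω => fun i => X i ω) ≤
      (1 / (t : ℝ)) * ∑ j : Fin m, H2 μ (fun ω => fun i : {i // i ∈ F j} => X i ω) := by
  classical
  have ht' : (0:ℝ) < t := by
    have : 0 < t := ht
    exact_mod_cast this
  set c : Fin n → ℝ := fun i => condH2 μ (X i) (XS X (Bf n i.val)) with hc
  have hBn : Bf n n = Finset.univ := by
    ext j; simp [Bf, j.isLt]
  have hfull : H2 μ (fun ω => fun i => X i ω) = H2 μ (XS X (Bf n n)) := by
    have he : Function.Injective
        (fun (v : ∀ i : Fin n, α i) (j : {j // j ∈ Bf n n}) => v j.1) := by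
      intro v w h
      funext i
      have hin : i ∈ Bf n n := by simp [Bf, i.isLt]
      exact congrFun h ⟨i, hin⟩
    exact (H2_comp_inj he (fun ω => fun i => X i ω)).symm
  have hchain : H2 μ (XS X (Bf n n)) = ∑ i ∈ Bf n n, c i := chain_prefix hnn hsum X n
  have hHc : H2 μ (fun ω => fun i => X i ω) = ∑ i : Fin n, c i := by
    rw [hfull, hchain, hBn]
  have hcnn : ∀ i, 0 ≤ c i := fun i => condH2_nonneg hnn _ _
  have hFle : ∀ j : Fin m,
      ∑ i ∈ F j, c i ≤ H2 μ (fun ω => fun i : {i // i ∈ F j} => X i ω) :=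
    fun j => sum_c_le hnn hsum X (F j)
  have hdc : ∑ j : Fin m, ∑ i ∈ F j, c i
      = ∑ i : Fin n, ((Finset.univ.filter (fun j => i ∈ F j)).card : ℝ) * c i := by
    have h1 : ∀ j, ∑ i ∈ F j, c i = ∑ i : Fin n, if i ∈ F j then c i else 0 := by
      intro j
      rw [Finset.sum_ite_mem, Finset.univ_inter]
    rw [Finset.sum_congr rfl (fun j _ => h1 j), Finset.sum_comm]
    refine Finset.sum_congr rfl fun i _ => ?_
    rw [Finset.sum_ite, Finset.sum_const_zero, add_zero, Finset.sum_const, nsmul_eq_mul]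
  have hts : (t:ℝ) * ∑ i, c i
      ≤ ∑ i : Fin n, ((Finset.univ.filter (fun j => i ∈ F j)).card : ℝ) * c i := by
    rw [Finset.mul_sum]
    refine Finset.sum_le_sum fun i _ => ?_
    exact mul_le_mul_of_nonneg_right (by exact_mod_cast hcov i) (hcnn i)
  have hsj : ∑ j : Fin m, ∑ i ∈ F j, c i
      ≤ ∑ j : Fin m, H2 μ (fun ω => fun i : {i // i ∈ F j} => X i ω) :=
    Finset.sum_le_sum fun j _ => hFle j
  have final : (t:ℝ) * H2 μ (fun ω => fun i => X i ω)
      ≤ ∑ j : Fin m, H2 μ (fun ω => fun i : {i // i ∈ F j} => X i ω) := by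
    rw [hHc]
    exact le_trans hts (le_trans (le_of_eq hdc.symm) hsj)
  rw [one_div, inv_mul_eq_div, le_div_iff₀ ht']
  linarith
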